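/- arXiv:2001.08498 — 2 statements merged into one kernel-verified Lean document; each statement's English description precedes it below -/
import Mathlib

section
/- Let p be a prime and N = pM. For γ = (a b; c d) ∈ Γ₀(N) set α_γ := (a pb; c/p d), which lies in Γ₀(M). If p ∤ M, fix a matrix μ_M = (x y; Mz pw) ∈ SL₂(ℤ) (such a matrix exists since gcd(p,M) = 1) and for γ ∈ Γ₀(N) set β_γ := γ·μ_M ∈ Γ₀(M). Let A := {Γ∞·α_γ : γ ∈ Γ₀(N)} and B := {Γ∞·β_γ : γ ∈ Γ₀(N)}, viewed as subsets of the coset space Γ∞\Γ₀(M). Then: (i) if p ∤ M, Γ∞\Γ₀(M) is the disjoint union of A and B (A ∪ B = Γ∞\Γ₀(M) and A ∩ B = ∅); (ii) if p | M, then Γ∞\Γ₀(M) = A. -/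
open Matrix MatrixGroups

local notation "SL2Z" => Matrix.SpecialLinearGroup (Fin 2) ℤ

/-- `Γ₀(K)` as a set of elements of `SL(2,ℤ)`. -/
def Gamma0' (K : ℤ) : Set SL2Z := { γ | K ∣ γ.1 1 0 }

/-- The translation matrix `T = (1 1; 0 1)`. -/
def Tmat : SL2Z := ⟨!![1, 1; 0, 1], by norm_num [Matrix.det_fin_two_of]⟩

/-- `Γ∞ = {±T^t : t ∈ ℤ}`. -/
def GammaInf : Set SL2Z := { A | ∃ t : ℤ, A = Tmat ^ t ∨ A = -(Tmat ^ t) }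

/-- The right coset `Γ∞ · δ`. -/
def cosetOf (δ : SL2Z) : Set SL2Z := { x | ∃ u ∈ GammaInf, x = u * δ }

/-- The coset space `Γ∞ \ Γ₀(K)`, as a set of cosets. -/
def cosets (K : ℤ) : Set (Set SL2Z) := { C | ∃ δ ∈ Gamma0' K, C = cosetOf δ }

/-- The set of cosets `Γ∞ · α_γ`, `γ ∈ Γ₀(pM)`, where `α_γ = (a pb; c/p d)`. -/
def alphaSet (p M : ℕ) : Set (Set SL2Z) :=
  { C | ∃ γ ∈ Gamma0' ((p : ℤ) * M), ∃ α : SL2Z,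
      α.1 0 0 = γ.1 0 0 ∧ α.1 0 1 = (p : ℤ) * γ.1 0 1 ∧
      (p : ℤ) * α.1 1 0 = γ.1 1 0 ∧ α.1 1 1 = γ.1 1 1 ∧
      C = cosetOf α }

/-- The set of cosets `Γ∞ · (γ μ)`, `γ ∈ Γ₀(pM)`. -/
def betaSet (p M : ℕ) (μ : SL2Z) : Set (Set SL2Z) :=
  { C | ∃ γ ∈ Gamma0' ((p : ℤ) * M), C = cosetOf (γ * μ) }

lemma det_entries (g : SL2Z) : g.1 0 0 * g.1 1 1 - g.1 0 1 * g.1 1 0 = 1 := by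
  have h := g.2; rwa [Matrix.det_fin_two] at h

lemma Tmat_eq : Tmat = ModularGroup.T := Subtype.ext rfl

lemma T_zpow_coe (t : ℤ) : (Tmat ^ t).1 = !![1, t; 0, 1] := by
  rw [Tmat_eq]; exact ModularGroup.coe_T_zpow t

lemma GammaInf_one : (1 : SL2Z) ∈ GammaInf := ⟨0, Or.inl (by simp)⟩

lemma neg_mul_SL (u v : SL2Z) : (-u) * v = -(u * v) := by
  apply Subtype.ext
  simp [Matrix.SpecialLinearGroup.coe_mul]

lemma mul_neg_SL (u v : SL2Z) : u * (-v) = -(u * v) := by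
  apply Subtype.ext
  simp [Matrix.SpecialLinearGroup.coe_mul]

lemma neg_neg_SL (u : SL2Z) : -(-u) = u := by
  apply Subtype.ext; simp

lemma GammaInf_mul {u v : SL2Z} (hu : u ∈ GammaInf) (hv : v ∈ GammaInf) : u * v ∈ GammaInf := by
  obtain ⟨s, hs | hs⟩ := hu <;> obtain ⟨t, ht | ht⟩ := hv <;>
    refine ⟨s + t, ?_⟩ <;> subst hs ht <;>
    simp [_root_.zpow_add, neg_mul_SL, mul_neg_SL, neg_neg_SL]

lemma GammaInf_inv {u : SL2Z} (hu : u ∈ GammaInf) : u⁻¹ ∈ GammaInf := by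
  obtain ⟨t, ht | ht⟩ := hu
  · exact ⟨-t, Or.inl (by rw [ht, _root_.zpow_neg])⟩
  · refine ⟨-t, Or.inr ?_⟩
    rw [ht]
    refine inv_eq_of_mul_eq_one_right ?_
    rw [mul_neg_SL, neg_mul_SL, neg_neg_SL, ← _root_.zpow_add, add_neg_cancel, zpow_zero]

lemma mem_cosetOf_self (δ : SL2Z) : δ ∈ cosetOf δ := ⟨1, GammaInf_one, (one_mul δ).symm⟩

lemma cosetOf_mul_eq {u : SL2Z} (hu : u ∈ GammaInf) (δ : SL2Z) :
    cosetOf (u * δ) = cosetOf δ := by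
  ext x
  constructor
  · rintro ⟨v, hv, rfl⟩
    exact ⟨v * u, GammaInf_mul hv hu, (mul_assoc _ _ _).symm⟩
  · rintro ⟨w, hw, rfl⟩
    exact ⟨w * u⁻¹, GammaInf_mul hw (GammaInf_inv hu), by group⟩

lemma cosetOf_eq_of_row {δ₁ δ₂ : SL2Z} (h0 : δ₁.1 1 0 = δ₂.1 1 0) (h1 : δ₁.1 1 1 = δ₂.1 1 1) :
    cosetOf δ₁ = cosetOf δ₂ := by
  set u := δ₁ * δ₂⁻¹ with hu
  have hinv : (δ₂⁻¹).1 = !![δ₂.1 1 1, -δ₂.1 0 1; -δ₂.1 1 0, δ₂.1 0 0] := by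
    rw [Matrix.SpecialLinearGroup.SL2_inv_expl]
    rfl
  have hcoe : u.1 = δ₁.1 * (δ₂⁻¹).1 := rfl
  have e10 : u.1 1 0 = 0 := by
    rw [hcoe, hinv]
    simp [Matrix.mul_apply, Fin.sum_univ_two, h0, h1]
    ring
  have e11 : u.1 1 1 = 1 := by
    have hd := det_entries δ₂
    rw [hcoe, hinv]
    simp [Matrix.mul_apply, Fin.sum_univ_two, h0, h1]
    linarith
  have e00 : u.1 0 0 = 1 := by
    have hd := det_entries u
    rw [e10, e11] at hd
    linarith
  have hT : u = Tmat ^ (u.1 0 1) := by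
    apply Subtype.ext
    rw [T_zpow_coe]
    ext i j
    fin_cases i <;> fin_cases j <;> simp [e00, e10, e11]
  have huG : u ∈ GammaInf := ⟨u.1 0 1, Or.inl hT⟩
  have : u * δ₂ = δ₁ := by rw [hu]; group
  rw [← this, cosetOf_mul_eq huG]

lemma d_eq_of_coset {δ₁ δ₂ : SL2Z} (h : cosetOf δ₁ = cosetOf δ₂) :
    δ₁.1 1 1 = δ₂.1 1 1 ∨ δ₁.1 1 1 = -δ₂.1 1 1 := by
  have hm : δ₁ ∈ cosetOf δ₂ := h ▸ mem_cosetOf_self δ₁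
  obtain ⟨u, ⟨t, ht | ht⟩, h1⟩ := hm
  · left
    subst ht
    rw [h1]
    show ((Tmat ^ t).1 * δ₂.1) 1 1 = _
    rw [T_zpow_coe]
    simp [Matrix.mul_apply, Fin.sum_univ_two]
  · right
    subst ht
    rw [h1, neg_mul_SL]
    show -(((Tmat ^ t).1 * δ₂.1)) 1 1 = _
    rw [T_zpow_coe]
    simp [Matrix.mul_apply, Fin.sum_univ_two]


lemma alpha_sub {p M : ℕ} (hp : p.Prime) {C : Set SL2Z} (hC : C ∈ alphaSet p M) :
    ∃ δ ∈ Gamma0' (M : ℤ), ¬ ((p:ℤ) ∣ δ.1 1 1) ∧ C = cosetOf δ := by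
  obtain ⟨γ, hγ, α, h00, h01, h10, h11, hCe⟩ := hC
  refine ⟨α, ?_, ?_, hCe⟩
  · obtain ⟨k, hk⟩ := hγ
    have hpq : (p:ℤ) * α.1 1 0 = (p:ℤ) * ((M:ℤ) * k) := by rw [h10, hk]; ring
    have hp0 : (p:ℤ) ≠ 0 := by exact_mod_cast hp.ne_zero
    exact ⟨k, mul_left_cancel₀ hp0 hpq⟩
  · intro hdvd
    rw [h11] at hdvd
    have hd := det_entries γ
    have h10' : (p:ℤ) ∣ γ.1 1 0 := dvd_trans (dvd_mul_right _ _) hγ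
    have hone : (p:ℤ) ∣ 1 := by
      rw [← hd]; exact dvd_sub (hdvd.mul_left _) (h10'.mul_left _)
    exact (Nat.prime_iff_prime_int.mp hp).not_dvd_one hone

lemma alpha_mem {p M : ℕ} (hp : p.Prime) {δ : SL2Z} (hδ : δ ∈ Gamma0' (M:ℤ))
    (hd : ¬ ((p:ℤ) ∣ δ.1 1 1)) : cosetOf δ ∈ alphaSet p M := by
  set c := δ.1 1 0 with hc
  set d := δ.1 1 1 with hdd
  have hcop : IsCoprime d c := ⟨δ.1 0 0, -(δ.1 0 1), by linear_combination det_entries δ⟩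
  have hpZ : Prime (p:ℤ) := Nat.prime_iff_prime_int.mp hp
  have hdp : IsCoprime d (p:ℤ) := ((hpZ.coprime_iff_not_dvd).mpr hd).symm
  obtain ⟨a, v, hav⟩ := hdp.mul_right hcop
  refine ⟨⟨!![a, -v; (p:ℤ)*c, d], by rw [Matrix.det_fin_two_of]; linear_combination hav⟩, ?_,
    ⟨!![a, (p:ℤ)*(-v); c, d], by rw [Matrix.det_fin_two_of]; linear_combination hav⟩,
    rfl, rfl, rfl, rfl, ?_⟩
  · obtain ⟨k, hk⟩ := hδ
    exact ⟨k, by show (p:ℤ)*c = _; rw [hc, hk]; ring⟩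
  · exact cosetOf_eq_of_row rfl rfl

lemma beta_sub {p M : ℕ} {μ : SL2Z}
    (hμe : ∃ x y z w : ℤ, μ.1 = !![x, y; (M : ℤ) * z, (p : ℤ) * w])
    {C : Set SL2Z} (hC : C ∈ betaSet p M μ) :
    ∃ δ ∈ Gamma0' (M : ℤ), ((p:ℤ) ∣ δ.1 1 1) ∧ C = cosetOf δ := by
  obtain ⟨x, y, z, w, hμ⟩ := hμe
  obtain ⟨γ, hγ, hCe⟩ := hC
  refine ⟨γ * μ, ?_, ?_, hCe⟩
  · have h10 : (γ * μ).1 1 0 = γ.1 1 0 * x + γ.1 1 1 * ((M:ℤ)*z) := by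
      show (γ.1 * μ.1) 1 0 = _
      rw [hμ]; simp [Matrix.mul_apply, Fin.sum_univ_two]
    show (M:ℤ) ∣ _
    rw [h10]
    exact dvd_add (((dvd_mul_left (M:ℤ) (p:ℤ)).trans hγ).mul_right x)
      ((dvd_mul_right (M:ℤ) z).mul_left _)
  · have h11 : (γ * μ).1 1 1 = γ.1 1 0 * y + γ.1 1 1 * ((p:ℤ)*w) := by
      show (γ.1 * μ.1) 1 1 = _
      rw [hμ]; simp [Matrix.mul_apply, Fin.sum_univ_two]
    rw [h11]
    exact dvd_add (((dvd_mul_right (p:ℤ) (M:ℤ)).trans hγ).mul_right y)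
      ((dvd_mul_right (p:ℤ) w).mul_left _)

lemma beta_mem {p M : ℕ} {μ : SL2Z} (hcop : IsCoprime (p:ℤ) (M:ℤ))
    (hμe : ∃ x y z w : ℤ, μ.1 = !![x, y; (M : ℤ) * z, (p : ℤ) * w])
    {δ : SL2Z} (hδ : δ ∈ Gamma0' (M:ℤ)) (hd : (p:ℤ) ∣ δ.1 1 1) :
    cosetOf δ ∈ betaSet p M μ := by
  obtain ⟨x, y, z, w, hμ⟩ := hμe
  refine ⟨δ * μ⁻¹, ?_, by rw [inv_mul_cancel_right]⟩
  have hinv : (μ⁻¹).1 = !![(p:ℤ)*w, -y; -((M:ℤ)*z), x] := by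
    rw [Matrix.SpecialLinearGroup.SL2_inv_expl]
    show ![![μ.1 1 1, -μ.1 0 1], ![-μ.1 1 0, μ.1 0 0]] = _
    ext i j
    fin_cases i <;> fin_cases j <;> simp [hμ]
  have h10 : (δ * μ⁻¹).1 1 0 = δ.1 1 0 * ((p:ℤ)*w) + δ.1 1 1 * (-((M:ℤ)*z)) := by
    show (δ.1 * (μ⁻¹).1) 1 0 = _
    rw [hinv]; simp [Matrix.mul_apply, Fin.sum_univ_two]
  show (p:ℤ) * (M:ℤ) ∣ _
  rw [h10]
  refine hcop.mul_dvd ?_ ?_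
  · exact dvd_add ((dvd_mul_right (p:ℤ) w).mul_left _) (hd.mul_right _)
  · exact dvd_add (hδ.mul_right _) ((dvd_neg.mpr (dvd_mul_right (M:ℤ) z)).mul_left _)

theorem statement0 (p M : ℕ) (hp : p.Prime) (hM : 0 < M) :
    ((¬ p ∣ M) → ∀ μ : SL2Z, (∃ x y z w : ℤ, μ.1 = !![x, y; (M : ℤ) * z, (p : ℤ) * w]) →
      cosets (M : ℤ) = alphaSet p M ∪ betaSet p M μ ∧ alphaSet p M ∩ betaSet p M μ = ∅) ∧
    (p ∣ M → cosets (M : ℤ) = alphaSet p M) := by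
  have hpZ : Prime (p:ℤ) := Nat.prime_iff_prime_int.mp hp
  constructor
  · intro hpM μ hμe
    have hcop : IsCoprime (p:ℤ) (M:ℤ) :=
      hpZ.coprime_iff_not_dvd.mpr (fun h => hpM (by exact_mod_cast h))
    constructor
    · ext C
      constructor
      · rintro ⟨δ, hδ, rfl⟩
        by_cases hd : (p:ℤ) ∣ δ.1 1 1
        · exact Or.inr (beta_mem hcop hμe hδ hd)
        · exact Or.inl (alpha_mem hp hδ hd)
      · rintro (h | h)
        · obtain ⟨δ, hδ, _, rfl⟩ := alpha_sub hp h
          exact ⟨δ, hδ, rfl⟩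
        · obtain ⟨δ, hδ, _, rfl⟩ := beta_sub hμe h
          exact ⟨δ, hδ, rfl⟩
    · ext C
      simp only [Set.mem_inter_iff, Set.mem_empty_iff_false, iff_false, not_and]
      intro hA hB
      obtain ⟨δ₁, _, hd1, rfl⟩ := alpha_sub hp hA
      obtain ⟨δ₂, _, hd2, he⟩ := beta_sub hμe hB
      rcases d_eq_of_coset he with h | h
      · exact hd1 (h ▸ hd2)
      · exact hd1 (by rw [h]; exact dvd_neg.mpr hd2)
  · intro hpM
    ext C
    constructor
    · rintro ⟨δ, hδ, rfl⟩
      apply alpha_mem hp hδ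
      intro hd
      have h10' : (p:ℤ) ∣ δ.1 1 0 :=
        dvd_trans (by exact_mod_cast Int.natCast_dvd_natCast.mpr hpM) hδ
      have hone : (p:ℤ) ∣ 1 := by
        rw [← det_entries δ]
        exact dvd_sub (hd.mul_left _) (h10'.mul_left _)
      exact hpZ.not_dvd_one hone
    · intro h
      obtain ⟨δ, hδ, _, rfl⟩ := alpha_sub hp h
      exact ⟨δ, hδ, rfl⟩
end

section
/- Let p be a prime, M a positive integer with p | M, and Q an exact divisor of M (Q | M and gcd(Q, M/Q) = 1) with p | Q. Let W = (Qx y; Mz Qw) be any integer matrix with determinant Q (x, y, z, w ∈ ℤ), and let T := (1 1; 0 1). Then for every integer j the matrix δ_j := W·T^j·W^{−1} has integer entries, lies in Γ₀(M), and satisfies δ_j ≡ I (mod p) entrywise, so that W·T^j = δ_j·W; explicitly, δ_j = (Qxw − jMxz − (M/Q)yz , jQx² ; −j(M/Q)z²M , Qxw + jMxz − (M/Q)yz). Moreover, if p ∤ j then δ_j ∉ Γ₀(pM). -/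
open Matrix MatrixGroups

local notation "SL2Z" => Matrix.SpecialLinearGroup (Fin 2) ℤ

theorem statement5 (p : ℕ) (hp : p.Prime) (M Q : ℤ) (hM : 0 < M) (hpM : (p : ℤ) ∣ M)
    (hQM : Q ∣ M) (hexact : Int.gcd Q (M / Q) = 1) (hpQ : (p : ℤ) ∣ Q)
    (x y z w : ℤ) (W : Matrix (Fin 2) (Fin 2) ℤ)
    (hW : W = !![Q * x, y; M * z, Q * w]) (hdet : W.det = Q)
    (j : ℤ) (δ : Matrix (Fin 2) (Fin 2) ℤ)
    (hδ : δ = !![Q * x * w - j * M * x * z - (M / Q) * y * z, j * Q * x ^ 2;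
                 -(j * ((M / Q) * z ^ 2) * M), Q * x * w + j * M * x * z - (M / Q) * y * z]) :
    δ.det = 1 ∧ M ∣ δ 1 0 ∧
      ((p : ℤ) ∣ (δ 0 0 - 1) ∧ (p : ℤ) ∣ δ 0 1 ∧ (p : ℤ) ∣ δ 1 0 ∧ (p : ℤ) ∣ (δ 1 1 - 1)) ∧
      W * ((Tmat ^ j : SL2Z) : Matrix (Fin 2) (Fin 2) ℤ) = δ * W ∧
      (¬ (p : ℤ) ∣ j → ¬ ((p : ℤ) * M ∣ δ 1 0)) := by
  have hQ0 : Q ≠ 0 := by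
    rintro rfl
    rw [Int.ediv_zero] at hexact
    simp [Int.gcd] at hexact
  set m : ℤ := M / Q with hmdef
  have hm : Q * m = M := Int.mul_ediv_cancel' hQM
  have hdet' : Q * x * (Q * w) - y * (M * z) = Q := by
    rw [hW, Matrix.det_fin_two_of] at hdet; exact hdet
  have hkey : Q * x * w - m * y * z = 1 := by
    have : Q * (Q * x * w - m * y * z) = Q * 1 := by linear_combination hdet' - y * z * hm
    exact mul_left_cancel₀ hQ0 this
  have hδ00 : δ 0 0 = Q * x * w - j * M * x * z - m * y * z := by rw [hδ]; rfl
  have hδ01 : δ 0 1 = j * Q * x ^ 2 := by rw [hδ]; rfl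
  have hδ10 : δ 1 0 = -(j * (m * z ^ 2) * M) := by rw [hδ]; rfl
  have hδ11 : δ 1 1 = Q * x * w + j * M * x * z - m * y * z := by rw [hδ]; rfl
  have hpunit : ¬ IsUnit ((p : ℤ)) := by
    intro hu
    rcases Int.isUnit_iff.mp hu with h | h <;> (have := hp.two_le; omega)
  have hpm : ¬ (p : ℤ) ∣ m := by
    intro h
    exact hpunit ((Int.isCoprime_iff_gcd_eq_one.mpr hexact).isUnit_of_dvd' hpQ h)
  have hpz : ¬ (p : ℤ) ∣ z := by
    intro h
    refine hpunit (isUnit_of_dvd_one ?_)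
    rw [← hkey]
    exact dvd_sub ((hpQ.mul_right x).mul_right w)
      (by simpa [mul_assoc] using (h.mul_left (m * y)))
  refine ⟨?_, ?_, ⟨?_, ?_, ?_, ?_⟩, ?_, ?_⟩
  · rw [hδ, Matrix.det_fin_two_of]
    linear_combination (Q * x * w - m * y * z + 1) * hkey + j ^ 2 * x ^ 2 * z ^ 2 * M * hm
  · rw [hδ10]; exact ⟨-(j * (m * z ^ 2)), by ring⟩
  · have : δ 0 0 - 1 = -(j * x * z) * M := by rw [hδ00]; linear_combination hkey
    rw [this]; exact hpM.mul_left _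
  · rw [hδ01]; exact (hpQ.mul_left j).mul_right _
  · rw [hδ10]; exact dvd_neg.mpr (hpM.mul_left _)
  · have : δ 1 1 - 1 = (j * x * z) * M := by rw [hδ11]; linear_combination hkey
    rw [this]; exact hpM.mul_left _
  · have hTmat : Tmat = ModularGroup.T := rfl
    have hT : ((Tmat ^ j : SL2Z) : Matrix (Fin 2) (Fin 2) ℤ) = !![1, j; 0, 1] := by
      rw [hTmat]; exact ModularGroup.coe_T_zpow j
    rw [hT, hW, hδ, ← hm]
    ext i k
    fin_cases i <;> fin_cases k <;>
      simp [Matrix.mul_apply, Fin.sum_univ_succ] <;>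
      first
        | linear_combination (Q * x) * hkey
        | linear_combination (-(Q * x)) * hkey
        | linear_combination (y + j * Q * x) * hkey
        | linear_combination (-(y + j * Q * x)) * hkey
        | linear_combination (Q * m * z) * hkey
        | linear_combination (-(Q * m * z)) * hkey
        | linear_combination (Q * w + j * Q * m * z) * hkey
        | linear_combination (-(Q * w + j * Q * m * z)) * hkey
  · intro hj hdvd
    rw [hδ10] at hdvd
    have hM0 : M ≠ 0 := hM.ne'
    obtain ⟨t, ht⟩ := hdvd
    have hMdvd : M * (-(j * (m * z ^ 2))) = M * ((p : ℤ) * t) := by linear_combination ht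
    have hpj : (p : ℤ) ∣ j * (m * z ^ 2) := by
      refine ⟨-t, ?_⟩
      have := mul_left_cancel₀ hM0 hMdvd
      linarith
    have hpp : Prime (p : ℤ) := Nat.prime_iff_prime_int.mp hp
    rcases hpp.dvd_mul.mp hpj with h | h
    · exact hj h
    · rcases hpp.dvd_mul.mp h with h | h
      · exact hpm h
      · rcases hpp.dvd_mul.mp (by rwa [sq] at h) with h | h <;> exact hpz h
end
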